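/- Let κ : [0,T] → ℝ be continuous with 0 < κ_min ≤ κ(t) ≤ κ_max, and let φ ≥ 0, and terminal value X(T) = -φ' + b/2 ≤ 0 with φ' ≥ b/2. Then the Riccati ODE X'(t) = φ - X(t)²/κ(t), X(T) = -φ' + b/2, has a unique solution on [0,T], and this solution satisfies X(t) ≤ 0 and X(t) ≥ -max(φ' - b/2, √(φ κ_max)) for all t ∈ [0,T] (in particular X is bounded). -/

import Mathlib

open Set

set_option linter.unusedSectionVars false
open Set
open scoped NNReal

section Generic

variable {E : Type*} [NormedAddCommGroup E] [NormedSpace ℝ E] [CompleteSpace E]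

lemma riccati_aux_nmem_closure {f : ℝ → E} {d : E} {s : Set ℝ} {x : ℝ} (h : x ∉ closure s) :
    HasDerivWithinAt f d s x :=
  HasFDerivWithinAt.of_notMem_closure h

/-- Glue two solutions of an ODE on adjacent intervals. -/
lemma riccati_aux_glue {g : ℝ → E → E} {a c b : ℝ} (hac : a ≤ c) (hcb : c ≤ b)
    {f₁ f₂ : ℝ → E}
    (h1 : ∀ t ∈ Icc a c, HasDerivWithinAt f₁ (g t (f₁ t)) (Icc a c) t)
    (h2 : ∀ t ∈ Icc c b, HasDerivWithinAt f₂ (g t (f₂ t)) (Icc c b) t)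
    (hm : f₁ c = f₂ c) :
    ∃ f : ℝ → E, (∀ t, t ≤ c → f t = f₁ t) ∧ (∀ t, c < t → f t = f₂ t) ∧
      ∀ t ∈ Icc a b, HasDerivWithinAt f (g t (f t)) (Icc a b) t := by
  classical
  set f : ℝ → E := fun t => if t ≤ c then f₁ t else f₂ t with hfdef
  have hfeq1 : ∀ t ∈ Icc a c, f t = f₁ t := fun t ht => if_pos ht.2
  have hfeq2 : ∀ t ∈ Icc c b, f t = f₂ t := by
    intro t ht
    by_cases h : t ≤ c
    · have htc : t = c := le_antisymm h ht.1
      simp [hfdef, htc, hm]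
    · exact if_neg h
  refine ⟨f, fun t ht => if_pos ht, fun t ht => if_neg (not_le.2 ht), ?_⟩
  intro t ht
  have H1 : HasDerivWithinAt f (g t (f t)) (Icc a c) t := by
    by_cases h : t ≤ c
    · have ht1 : t ∈ Icc a c := ⟨ht.1, h⟩
      have := (h1 t ht1).congr hfeq1 (hfeq1 t ht1)
      rwa [hfeq1 t ht1]
    · refine riccati_aux_nmem_closure ?_
      rw [isClosed_Icc.closure_eq]
      exact fun hmem => h hmem.2
  have H2 : HasDerivWithinAt f (g t (f t)) (Icc c b) t := by
    by_cases h : c ≤ t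
    · have ht2 : t ∈ Icc c b := ⟨h, ht.2⟩
      have := (h2 t ht2).congr hfeq2 (hfeq2 t ht2)
      rwa [hfeq2 t ht2]
    · refine riccati_aux_nmem_closure ?_
      rw [isClosed_Icc.closure_eq]
      exact fun hmem => h hmem.1
  have := H1.union H2
  rwa [Icc_union_Icc_eq_Icc hac hcb] at this

/-- One Picard–Lindelöf step of uniform length for a linearly bounded field. -/
lemma riccati_aux_step {g : ℝ → E → E} {a b : ℝ} {L : ℝ≥0} (hL : 0 < (L : ℝ))
    (hlip : ∀ t ∈ Icc a b, LipschitzWith L (g t))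
    (hcont : ∀ x : E, ContinuousOn (fun t => g t x) (Icc a b))
    (hnorm : ∀ t ∈ Icc a b, ∀ x : E, ‖g t x‖ ≤ L * ‖x‖)
    {t₀ : ℝ} (ht₀ : t₀ ∈ Icc a b) (x₀ : E) :
    ∃ f : ℝ → E, f t₀ = x₀ ∧ ∀ t ∈ Icc t₀ (min b (t₀ + (2 * (L : ℝ))⁻¹)),
      HasDerivWithinAt f (g t (f t)) (Icc t₀ (min b (t₀ + (2 * (L : ℝ))⁻¹))) t := by
  set h : ℝ := (2 * (L : ℝ))⁻¹ with hh
  have hhpos : 0 < h := by positivity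
  set t₁ : ℝ := min b (t₀ + h) with ht₁def
  have ht₀t₁ : t₀ ≤ t₁ := le_min ht₀.2 (by linarith)
  have hsub : Icc t₀ t₁ ⊆ Icc a b :=
    Icc_subset_Icc ht₀.1 (min_le_left _ _)
  have hpl : IsPicardLindelof g (tmin := t₀) (tmax := t₁) ⟨t₀, ⟨le_refl _, ht₀t₁⟩⟩ x₀
      (‖x₀‖₊ + 1) 0 (2 * L * (‖x₀‖₊ + 1)) L := by
    refine ⟨?_, ?_, ?_, ?_⟩
    · exact fun t ht => (hlip t (hsub ht)).lipschitzOnWith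
    · exact fun x _ => (hcont x).mono hsub
    · intro t ht x hx
      push_cast at hx ⊢
      have hxle : ‖x‖ ≤ ‖x₀‖ + (‖x₀‖ + 1) := by
        have : ‖x - x₀‖ ≤ ‖x₀‖ + 1 := by
          rw [← dist_eq_norm]; exact Metric.mem_closedBall.1 hx
        calc ‖x‖ = ‖x₀ + (x - x₀)‖ := by rw [add_sub_cancel]
          _ ≤ ‖x₀‖ + ‖x - x₀‖ := norm_add_le _ _
          _ ≤ ‖x₀‖ + (‖x₀‖ + 1) := by linarith
      calc ‖g t x‖ ≤ L * ‖x‖ := hnorm t (hsub ht) x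
        _ ≤ L * (‖x₀‖ + (‖x₀‖ + 1)) := by
            apply mul_le_mul_of_nonneg_left hxle L.2
        _ ≤ 2 * L * (‖x₀‖ + 1) := by nlinarith [norm_nonneg x₀]
    · push_cast
      rw [sub_zero]
      have hmax : max (t₁ - t₀) (t₀ - t₀) ≤ h := by
        apply max_le _ (by linarith)
        have : t₁ ≤ t₀ + h := min_le_right _ _
        linarith
      calc (2 * (L : ℝ) * (‖x₀‖ + 1)) * max (t₁ - t₀) (t₀ - t₀)
          ≤ (2 * L * (‖x₀‖ + 1)) * h := by
            apply mul_le_mul_of_nonneg_left hmax (by positivity)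
        _ = ‖x₀‖ + 1 := by
            rw [hh]
            have hL' : (L:ℝ) ≠ 0 := ne_of_gt hL
            field_simp
  exact hpl.exists_eq_forall_mem_Icc_hasDerivWithinAt₀


/-- Chain Picard–Lindelöf steps to the right. -/
lemma riccati_aux_chain_right {g : ℝ → E → E} {a b : ℝ} {L : ℝ≥0} (hL : 0 < (L : ℝ))
    (hlip : ∀ t ∈ Icc a b, LipschitzWith L (g t))
    (hcont : ∀ x : E, ContinuousOn (fun t => g t x) (Icc a b))
    (hnorm : ∀ t ∈ Icc a b, ∀ x : E, ‖g t x‖ ≤ L * ‖x‖) :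
    ∀ n : ℕ, ∀ t₀, t₀ ∈ Icc a b → ∀ x₀ : E, b - t₀ ≤ n * (2 * (L : ℝ))⁻¹ →
      ∃ f : ℝ → E, f t₀ = x₀ ∧ ∀ t ∈ Icc t₀ b, HasDerivWithinAt f (g t (f t)) (Icc t₀ b) t := by
  intro n
  induction n with
  | zero =>
      intro t₀ ht₀ x₀ hle
      have hb : t₀ = b := le_antisymm ht₀.2 (by push_cast at hle; linarith)
      obtain ⟨f, hf0, hf⟩ := riccati_aux_step hL hlip hcont hnorm ht₀ x₀
      refine ⟨f, hf0, ?_⟩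
      have : min b (t₀ + (2 * (L : ℝ))⁻¹) = b := by
        apply min_eq_left
        have : (0:ℝ) < (2 * (L : ℝ))⁻¹ := by positivity
        rw [hb]; linarith
      rw [this] at hf; exact hf
  | succ n ih =>
      intro t₀ ht₀ x₀ hle
      set h : ℝ := (2 * (L : ℝ))⁻¹ with hh
      have hhpos : 0 < h := by positivity
      set t₁ : ℝ := min b (t₀ + h) with ht₁def
      have ht₀t₁ : t₀ ≤ t₁ := le_min ht₀.2 (by linarith)
      have ht₁b : t₁ ≤ b := min_le_left _ _
      have ht₁ : t₁ ∈ Icc a b := ⟨le_trans ht₀.1 ht₀t₁, ht₁b⟩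
      obtain ⟨f₁, hf₁0, hf₁⟩ := riccati_aux_step hL hlip hcont hnorm ht₀ x₀
      have hle' : b - t₁ ≤ n * h := by
        rcases min_cases b (t₀ + h) with ⟨he, _⟩ | ⟨he, _⟩
        · rw [ht₁def, he]
          have : (0:ℝ) ≤ n * h := by positivity
          linarith
        · rw [ht₁def, he]; push_cast at hle; linarith
      obtain ⟨f₂, hf₂0, hf₂⟩ := ih t₁ ht₁ (f₁ t₁) hle'
      obtain ⟨f, hfl, _, hf⟩ := riccati_aux_glue ht₀t₁ ht₁b hf₁ hf₂ hf₂0.symm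
      exact ⟨f, (hfl t₀ ht₀t₁).trans hf₁0, hf⟩

/-- Chain Picard–Lindelöf steps to the left, by time reversal. -/
lemma riccati_aux_chain_left {g : ℝ → E → E} {a b : ℝ} {L : ℝ≥0} (hL : 0 < (L : ℝ))
    (hlip : ∀ t ∈ Icc a b, LipschitzWith L (g t))
    (hcont : ∀ x : E, ContinuousOn (fun t => g t x) (Icc a b))
    (hnorm : ∀ t ∈ Icc a b, ∀ x : E, ‖g t x‖ ≤ L * ‖x‖)
    (n : ℕ) {t₀ : ℝ} (ht₀ : t₀ ∈ Icc a b) (x₀ : E) (hlen : t₀ - a ≤ n * (2 * (L : ℝ))⁻¹) :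
    ∃ f : ℝ → E, f t₀ = x₀ ∧ ∀ t ∈ Icc a t₀, HasDerivWithinAt f (g t (f t)) (Icc a t₀) t := by
  set G : ℝ → E → E := fun s x => -g (-s) x with hG
  have hmaps : MapsTo (fun s : ℝ => -s) (Icc (-b) (-a)) (Icc a b) :=
    fun s hs => ⟨le_neg.mp hs.2, neg_le.mp hs.1⟩
  have hlip' : ∀ s ∈ Icc (-b) (-a), LipschitzWith L (G s) := by
    intro s hs
    have := (hlip (-s) (hmaps hs))
    have h1 : LipschitzWith 1 (fun x : E => -x) := LipschitzWith.id.neg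
    simpa [hG, one_mul, Function.comp_def] using h1.comp this
  have hcont' : ∀ x : E, ContinuousOn (fun s => G s x) (Icc (-b) (-a)) := by
    intro x
    exact ((hcont x).comp continuousOn_neg hmaps).neg
  have hnorm' : ∀ s ∈ Icc (-b) (-a), ∀ x : E, ‖G s x‖ ≤ L * ‖x‖ := by
    intro s hs x
    simpa [hG] using hnorm (-s) (hmaps hs) x
  have ht₀' : -t₀ ∈ Icc (-b) (-a) := ⟨neg_le_neg ht₀.2, neg_le_neg ht₀.1⟩
  have hlen' : -a - -t₀ ≤ n * (2 * (L : ℝ))⁻¹ := by linarith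
  obtain ⟨F, hF0, hF⟩ :=
    riccati_aux_chain_right hL hlip' hcont' hnorm' n (-t₀) ht₀' x₀ hlen'
  refine ⟨fun t => F (-t), by simpa using hF0, ?_⟩
  intro t ht
  have hmem : -t ∈ Icc (-t₀) (-a) := ⟨neg_le_neg ht.2, neg_le_neg ht.1⟩
  have hmaps2 : MapsTo (fun s : ℝ => -s) (Icc a t₀) (Icc (-t₀) (-a)) :=
    fun s hs => ⟨neg_le_neg hs.2, neg_le_neg hs.1⟩
  have hD := (hF (-t) hmem).scomp (x := t) (h := fun s : ℝ => -s)
    ((hasDerivAt_neg t).hasDerivWithinAt) hmaps2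
  simpa [hG, Function.comp_def] using hD

/-- Global existence for a linearly bounded, Lipschitz field. -/
lemma riccati_aux_global {g : ℝ → E → E} {a b : ℝ} {L : ℝ≥0} (hL : 0 < (L : ℝ))
    (hlip : ∀ t ∈ Icc a b, LipschitzWith L (g t))
    (hcont : ∀ x : E, ContinuousOn (fun t => g t x) (Icc a b))
    (hnorm : ∀ t ∈ Icc a b, ∀ x : E, ‖g t x‖ ≤ L * ‖x‖)
    {t₀ : ℝ} (ht₀ : t₀ ∈ Icc a b) (x₀ : E) :
    ∃ f : ℝ → E, f t₀ = x₀ ∧ ∀ t ∈ Icc a b, HasDerivWithinAt f (g t (f t)) (Icc a b) t := by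
  obtain ⟨n, hn⟩ := exists_nat_ge ((b - a) * (2 * (L : ℝ)))
  have h2L : 0 < 2 * (L : ℝ) := by linarith
  have hlen : b - a ≤ n * (2 * (L : ℝ))⁻¹ := by
    have h2 : b - a ≤ (n : ℝ) / (2 * (L : ℝ)) := (le_div_iff₀ h2L).mpr hn
    rwa [div_eq_mul_inv] at h2
  have hab : a ≤ b := ht₀.1.trans ht₀.2
  obtain ⟨fR, hfR0, hfR⟩ := riccati_aux_chain_right hL hlip hcont hnorm n t₀ ht₀ x₀
    (by have := ht₀.1; linarith)
  obtain ⟨fL, hfL0, hfL⟩ := riccati_aux_chain_left hL hlip hcont hnorm n ht₀ x₀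
    (by have := ht₀.2; linarith)
  obtain ⟨f, hfl, _, hf⟩ := riccati_aux_glue ht₀.1 ht₀.2 hfL hfR (hfL0.trans hfR0.symm)
  exact ⟨f, (hfl t₀ le_rfl).trans hfL0, hf⟩

end Generic


lemma riccati_alg_aux (φ wt ut kt : ℝ) (hu : ut ≠ 0) (hk : kt ≠ 0) :
    φ - (wt / ut) ^ 2 / kt = (φ * ut * ut - wt * (kt⁻¹ * wt)) / ut ^ 2 := by
  field_simp

set_option maxHeartbeats 1600000

/-- Global existence, uniqueness and bounds for the backward Riccati equation
`X' = φ - X²/κ(t)`, `X T = -φ' + b/2`, with `0 < κ_min ≤ κ ≤ κ_max`, `φ ≥ 0`, `φ' ≥ b/2`. -/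
theorem riccati_existence_uniqueness_bounds
    (T φ φ' b κmin κmax : ℝ) (hT : 0 < T)
    (κ : ℝ → ℝ) (hκ : ContinuousOn κ (Icc 0 T))
    (hκmin : ∀ t ∈ Icc 0 T, κmin ≤ κ t) (hκmax : ∀ t ∈ Icc 0 T, κ t ≤ κmax)
    (hκ0 : 0 < κmin) (hφ : 0 ≤ φ) (hφ' : b / 2 ≤ φ') :
    ∃ X : ℝ → ℝ,
      ((∀ t ∈ Icc 0 T, HasDerivAt X (φ - (X t) ^ 2 / κ t) t) ∧ X T = -φ' + b / 2) ∧
      (∀ t ∈ Icc 0 T,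
        X t ≤ 0 ∧ -max (φ' - b / 2) (Real.sqrt (φ * κmax)) ≤ X t) ∧
      (∀ Y : ℝ → ℝ,
        (∀ t ∈ Icc 0 T, HasDerivAt Y (φ - (Y t) ^ 2 / κ t) t) → Y T = -φ' + b / 2 →
        EqOn X Y (Icc 0 T)) := by
  have hT0 : (0:ℝ) ∈ Icc 0 T := ⟨le_rfl, hT.le⟩
  have hTT : T ∈ Icc (0:ℝ) T := ⟨hT.le, le_rfl⟩
  have hκmax0 : 0 < κmax := lt_of_lt_of_le hκ0 (le_trans (hκmin T hTT) (hκmax T hTT))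
  -- clamped κ
  set κ' : ℝ → ℝ := fun t => κ (max 0 (min t T)) with hκ'def
  have hclamp : ∀ t : ℝ, max 0 (min t T) ∈ Icc 0 T :=
    fun t => ⟨le_max_left _ _, max_le hT.le (min_le_right _ _)⟩
  have hκ'eq : ∀ t ∈ Icc (0:ℝ) T, κ' t = κ t := by
    intro t ht
    simp only [hκ'def]
    rw [min_eq_left ht.2, max_eq_right ht.1]
  have hκ'min : ∀ t, κmin ≤ κ' t := fun t => hκmin _ (hclamp t)
  have hκ'pos : ∀ t, 0 < κ' t := fun t => lt_of_lt_of_le hκ0 (hκ'min t)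
  have hκ'cont : Continuous κ' :=
    hκ.comp_continuous (continuous_const.max (continuous_id.min continuous_const)) hclamp
  -- the linear field
  set Lr : ℝ := (max κmin⁻¹ φ) + 1 with hLrdef
  have hLrpos : 0 < Lr := by
    rw [hLrdef]
    have : (0:ℝ) ≤ max κmin⁻¹ φ := le_trans hφ (le_max_right _ _)
    linarith
  set L : ℝ≥0 := ⟨Lr, hLrpos.le⟩ with hLdef
  have hLcoe : (L : ℝ) = Lr := rfl
  have hκinvLr : κmin⁻¹ ≤ Lr := by
    rw [hLrdef]; have := le_max_left κmin⁻¹ φ; linarith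
  have hφLr : φ ≤ Lr := by rw [hLrdef]; have := le_max_right κmin⁻¹ φ; linarith
  set g : ℝ → (ℝ × ℝ) → (ℝ × ℝ) := fun t p => ((κ' t)⁻¹ * p.2, φ * p.1) with hgdef
  have hκ'invle : ∀ t, (κ' t)⁻¹ ≤ κmin⁻¹ := fun t =>
    inv_anti₀ hκ0 (hκ'min t)
  have key : ∀ (t : ℝ) (p q : ℝ × ℝ), dist (g t p) (g t q) ≤ Lr * dist p q := by
    intro t p q
    rw [Prod.dist_eq]
    have hd1 : dist p.1 q.1 ≤ dist p q := by rw [Prod.dist_eq]; exact le_max_left _ _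
    have hd2 : dist p.2 q.2 ≤ dist p q := by rw [Prod.dist_eq]; exact le_max_right _ _
    have hdnn : 0 ≤ dist p q := dist_nonneg
    apply max_le
    · show dist ((κ' t)⁻¹ * p.2) ((κ' t)⁻¹ * q.2) ≤ Lr * dist p q
      rw [Real.dist_eq, ← mul_sub, abs_mul, abs_of_pos (inv_pos.2 (hκ'pos t))]
      have h2 : |p.2 - q.2| ≤ dist p q := by rw [← Real.dist_eq]; exact hd2
      have h3 : (κ' t)⁻¹ ≤ Lr := le_trans (hκ'invle t) hκinvLr
      nlinarith [abs_nonneg (p.2 - q.2), inv_pos.2 (hκ'pos t)]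
    · show dist (φ * p.1) (φ * q.1) ≤ Lr * dist p q
      rw [Real.dist_eq, ← mul_sub, abs_mul, abs_of_nonneg hφ]
      have h2 : |p.1 - q.1| ≤ dist p q := by rw [← Real.dist_eq]; exact hd1
      nlinarith [abs_nonneg (p.1 - q.1)]
  have hlip : ∀ t ∈ Icc (-1:ℝ) (T+1), LipschitzWith L (g t) := by
    intro t _
    exact LipschitzWith.of_dist_le_mul (fun p q => key t p q)
  have hg0 : ∀ t, g t 0 = 0 := by intro t; simp [hgdef]
  have hnorm : ∀ t ∈ Icc (-1:ℝ) (T+1), ∀ x : ℝ × ℝ, ‖g t x‖ ≤ (L : ℝ) * ‖x‖ := by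
    intro t _ x
    have := key t x 0
    rw [hg0 t, dist_zero_right, dist_zero_right] at this
    exact this
  have hcont : ∀ x : ℝ × ℝ, ContinuousOn (fun t => g t x) (Icc (-1:ℝ) (T+1)) := by
    intro x
    apply Continuous.continuousOn
    exact ((hκ'cont.inv₀ (fun t => ne_of_gt (hκ'pos t))).mul continuous_const).prodMk
      continuous_const
  -- solve the linear system
  have hTmem : T ∈ Icc (-1:ℝ) (T+1) := ⟨by linarith, by linarith⟩
  obtain ⟨p, hp0, hp⟩ := riccati_aux_global (E := ℝ × ℝ) (show 0 < (L:ℝ) from hLrpos)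
    hlip hcont hnorm hTmem (1, -φ' + b/2)
  have hpfull : ∀ t ∈ Icc (0:ℝ) T, HasDerivAt p (g t (p t)) t := by
    intro t ht
    exact (hp t ⟨by linarith [ht.1], by linarith [ht.2]⟩).hasDerivAt
      (Icc_mem_nhds (by linarith [ht.1]) (by linarith [ht.2]))
  set u : ℝ → ℝ := fun t => (p t).1 with hudef
  set w : ℝ → ℝ := fun t => (p t).2 with hwdef
  have hu : ∀ t ∈ Icc (0:ℝ) T, HasDerivAt u ((κ' t)⁻¹ * w t) t := by
    intro t ht
    have h1 := (ContinuousLinearMap.fst ℝ ℝ ℝ).hasFDerivAt.comp_hasDerivAt t (hpfull t ht)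
    simpa [hgdef, hudef, Function.comp_def] using h1
  have hw : ∀ t ∈ Icc (0:ℝ) T, HasDerivAt w (φ * u t) t := by
    intro t ht
    have h1 := (ContinuousLinearMap.snd ℝ ℝ ℝ).hasFDerivAt.comp_hasDerivAt t (hpfull t ht)
    simpa [hgdef, hwdef, Function.comp_def] using h1
  have hucont : ContinuousOn u (Icc 0 T) :=
    fun t ht => (hu t ht).continuousAt.continuousWithinAt
  have hwcont : ContinuousOn w (Icc 0 T) :=
    fun t ht => (hw t ht).continuousAt.continuousWithinAt
  have huT : u T = 1 := by rw [hudef]; simp [hp0]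
  have hwT : w T = -φ' + b/2 := by rw [hwdef]; simp [hp0]
  have hwT0 : w T ≤ 0 := by rw [hwT]; linarith
  -- invariance
  have keyinv : ∀ c ∈ Icc (0:ℝ) T, (∀ s ∈ Icc c T, 0 < u s) →
      ∀ s ∈ Icc c T, w s ≤ w T ∧ 1 ≤ u s := by
    intro c hc hpos
    have hsub : Icc c T ⊆ Icc 0 T := Icc_subset_Icc hc.1 le_rfl
    have hTmem' : T ∈ Icc c T := ⟨hc.2, le_rfl⟩
    have hwmono : MonotoneOn w (Icc c T) := by
      apply monotoneOn_of_deriv_nonneg (convex_Icc c T) (hwcont.mono hsub)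
      · intro s hs
        rw [interior_Icc] at hs
        exact ((hw s (hsub (Ioo_subset_Icc_self hs))).differentiableAt).differentiableWithinAt
      · intro s hs
        rw [interior_Icc] at hs
        have hs' := Ioo_subset_Icc_self hs
        rw [(hw s (hsub hs')).deriv]
        exact mul_nonneg hφ (hpos s hs').le
    have hwle : ∀ s ∈ Icc c T, w s ≤ w T := fun s hs => hwmono hs hTmem' hs.2
    have huanti : AntitoneOn u (Icc c T) := by
      apply antitoneOn_of_deriv_nonpos (convex_Icc c T) (hucont.mono hsub)
      · intro s hs
        rw [interior_Icc] at hs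
        exact ((hu s (hsub (Ioo_subset_Icc_self hs))).differentiableAt).differentiableWithinAt
      · intro s hs
        rw [interior_Icc] at hs
        have hs' := Ioo_subset_Icc_self hs
        rw [(hu s (hsub hs')).deriv]
        have h1 : w s ≤ 0 := le_trans (hwle s hs') hwT0
        have h2 : 0 ≤ (κ' s)⁻¹ := (inv_pos.2 (hκ'pos s)).le
        exact mul_nonpos_of_nonneg_of_nonpos h2 h1
    intro s hs
    refine ⟨hwle s hs, ?_⟩
    have := huanti hs hTmem' hs.2
    rwa [huT] at this
  have hinv : ∀ s ∈ Icc (0:ℝ) T, w s ≤ w T ∧ 1 ≤ u s := by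
    set S : Set ℝ := {t | t ∈ Icc 0 T ∧ ∀ s ∈ Icc t T, 1 ≤ u s} with hSdef
    have hTS : T ∈ S := by
      refine ⟨hTT, fun s hs => ?_⟩
      have : s = T := le_antisymm hs.2 hs.1
      rw [this, huT]
    have hne : S.Nonempty := ⟨T, hTS⟩
    have hbdd : BddBelow S := ⟨0, fun t ht => ht.1.1⟩
    set τ : ℝ := sInf S with hτdef
    have hτmem : τ ∈ Icc (0:ℝ) T := ⟨le_csInf hne (fun t ht => ht.1.1), csInf_le hbdd hTS⟩
    have hGT : ∀ s, τ < s → s ≤ T → 1 ≤ u s := by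
      intro s hlt hsT
      obtain ⟨t', ht'S, ht'lt⟩ := exists_lt_of_csInf_lt hne hlt
      exact ht'S.2 s ⟨ht'lt.le, hsT⟩
    have huτ : 1 ≤ u τ := by
      rcases eq_or_lt_of_le hτmem.2 with he | hlt
      · rw [he, huT]
      · have hcont' : ContinuousWithinAt u (Ioi τ) τ :=
          (hu τ hτmem).continuousAt.continuousWithinAt
        apply ge_of_tendsto hcont'
        filter_upwards [Ioc_mem_nhdsGT hlt] with s hs
        exact hGT s hs.1 hs.2
    have hu1 : ∀ s ∈ Icc τ T, 1 ≤ u s := by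
      intro s hs
      rcases eq_or_lt_of_le hs.1 with he | hlt
      · rwa [← he]
      · exact hGT s hlt hs.2
    have hτ0 : τ = 0 := by
      by_contra hne0
      have hτpos : 0 < τ := lt_of_le_of_ne hτmem.1 (Ne.symm hne0)
      have hcu : ContinuousAt u τ := (hu τ hτmem).continuousAt
      obtain ⟨δ, hδpos, hδ⟩ :=
        Metric.mem_nhds_iff.1 (hcu (Ioi_mem_nhds (by linarith : (1:ℝ)/2 < u τ)))
      set τ' : ℝ := max 0 (τ - δ/2) with hτ'def
      have hτ'lt : τ' < τ := max_lt hτpos (by linarith)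
      have hτ'mem : τ' ∈ Icc (0:ℝ) T := ⟨le_max_left _ _, le_trans hτ'lt.le hτmem.2⟩
      have hposτ' : ∀ s ∈ Icc τ' T, 0 < u s := by
        intro s hs
        rcases le_or_gt τ s with h | h
        · have := hu1 s ⟨h, hs.2⟩; linarith
        · have hball : s ∈ Metric.ball τ δ := by
            rw [Metric.mem_ball, Real.dist_eq, abs_of_nonpos (by linarith)]
            have : τ - δ/2 ≤ τ' := le_max_right _ _
            have := hs.1
            linarith
          have := hδ hball
          rw [mem_preimage, mem_Ioi] at this
          linarith
      have hτ'S : τ' ∈ S := ⟨hτ'mem, fun s hs => (keyinv τ' hτ'mem hposτ' s hs).2⟩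
      have := csInf_le hbdd hτ'S
      rw [← hτdef] at this
      linarith
    have hpos0 : ∀ s ∈ Icc (0:ℝ) T, 0 < u s := by
      intro s hs
      have := hu1 s ⟨hτ0 ▸ hs.1, hs.2⟩
      linarith
    exact keyinv 0 hT0 hpos0
  -- the Riccati solution
  set X : ℝ → ℝ := fun t => w t / u t with hXdef
  have hu0 : ∀ t ∈ Icc (0:ℝ) T, u t ≠ 0 := by
    intro t ht
    have := (hinv t ht).2; linarith
  have hXderiv : ∀ t ∈ Icc (0:ℝ) T, HasDerivAt X (φ - (X t) ^ 2 / κ t) t := by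
    intro t ht
    have hd := (hw t ht).div (hu t ht) (hu0 t ht)
    have hd' : HasDerivAt X _ t := hd
    convert hd' using 1
    have hXt : X t = w t / u t := rfl
    rw [hXt, ← hκ'eq t ht]
    exact riccati_alg_aux φ (w t) (u t) (κ' t) (hu0 t ht) (ne_of_gt (hκ'pos t))
  have hXT : X T = -φ' + b/2 := by rw [hXdef]; simp [huT, hwT]
  have hXcont : ContinuousOn X (Icc 0 T) :=
    fun t ht => (hXderiv t ht).continuousAt.continuousWithinAt
  set M : ℝ := max (φ' - b/2) (Real.sqrt (φ * κmax)) with hMdef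
  have hM0 : 0 ≤ M := le_trans (Real.sqrt_nonneg _) (le_max_right _ _)
  have hMsq : φ * κmax ≤ M^2 := by
    have h1 : Real.sqrt (φ * κmax) ≤ M := le_max_right _ _
    have h2 : (0:ℝ) ≤ φ * κmax := mul_nonneg hφ hκmax0.le
    nlinarith [Real.sq_sqrt h2, Real.sqrt_nonneg (φ * κmax)]
  have hXTlb : -M ≤ X T := by
    rw [hXT]
    have : φ' - b/2 ≤ M := le_max_left _ _
    linarith
  have hXnonpos : ∀ t ∈ Icc (0:ℝ) T, X t ≤ 0 := by
    intro t ht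
    have h1 : w t ≤ 0 := le_trans (hinv t ht).1 hwT0
    have h2 : 0 < u t := by have := (hinv t ht).2; linarith
    exact div_nonpos_of_nonpos_of_nonneg h1 h2.le
  have hXlb : ∀ t ∈ Icc (0:ℝ) T, -M ≤ X t := by
    intro t₀ ht₀
    by_contra hcon
    push_neg at hcon
    set A : Set ℝ := {s | s ∈ Icc t₀ T ∧ -M ≤ X s} with hAdef
    have hTA : T ∈ A := ⟨⟨ht₀.2, le_rfl⟩, hXTlb⟩
    have hAne : A.Nonempty := ⟨T, hTA⟩
    have hAbdd : BddBelow A := ⟨t₀, fun s hs => hs.1.1⟩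
    have hAeq : A = Icc t₀ T ∩ X ⁻¹' (Ici (-M)) := by
      ext s; simp [hAdef, and_comm]
    have hAclosed : IsClosed A := by
      rw [hAeq]
      exact (hXcont.mono (Icc_subset_Icc ht₀.1 le_rfl)).preimage_isClosed_of_isClosed
        isClosed_Icc isClosed_Ici
    set τ : ℝ := sInf A with hτdef
    have hτA : τ ∈ A := hAclosed.csInf_mem hAne hAbdd
    have hτmem : τ ∈ Icc t₀ T := hτA.1
    have hup : ∀ s ∈ Ico t₀ τ, X s < -M := by
      intro s hs
      by_contra hc
      push_neg at hc
      have hsA : s ∈ A := ⟨⟨hs.1, le_trans hs.2.le hτmem.2⟩, hc⟩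
      have := csInf_le hAbdd hsA
      rw [← hτdef] at this
      linarith [hs.2]
    have hsub2 : Icc t₀ τ ⊆ Icc (0:ℝ) T := Icc_subset_Icc ht₀.1 hτmem.2
    have hanti : AntitoneOn X (Icc t₀ τ) := by
      apply antitoneOn_of_deriv_nonpos (convex_Icc _ _) (hXcont.mono hsub2)
      · intro s hs
        rw [interior_Icc] at hs
        exact ((hXderiv s (hsub2 (Ioo_subset_Icc_self hs))).differentiableAt).differentiableWithinAt
      · intro s hs
        rw [interior_Icc] at hs
        have hs' := hsub2 (Ioo_subset_Icc_self hs)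
        rw [(hXderiv s hs').deriv]
        have hXs : X s < -M := hup s ⟨hs.1.le, hs.2⟩
        have hκs : 0 < κ s := lt_of_lt_of_le hκ0 (hκmin s hs')
        have hsq : M^2 ≤ (X s)^2 := by nlinarith
        have hle2 : φ * κ s ≤ (X s)^2 := by
          have := mul_le_mul_of_nonneg_left (hκmax s hs') hφ
          linarith [hMsq]
        rw [sub_nonpos, le_div_iff₀ hκs]
        linarith
    have h1 : X τ ≤ X t₀ := hanti ⟨le_rfl, hτmem.1⟩ ⟨hτmem.1, le_rfl⟩ hτmem.1
    have h2 := hτA.2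
    linarith
  refine ⟨X, ⟨hXderiv, hXT⟩, fun t ht => ⟨hXnonpos t ht, hXlb t ht⟩, ?_⟩
  -- uniqueness
  intro Y hY hYT
  have hYcont : ContinuousOn Y (Icc 0 T) :=
    fun t ht => (hY t ht).continuousAt.continuousWithinAt
  obtain ⟨CY, hCY⟩ := (isCompact_Icc (a := (0:ℝ)) (b := T)).exists_bound_of_continuousOn hYcont
  set K : ℝ := max M CY with hKdef
  have hK0 : 0 ≤ K := le_trans hM0 (le_max_left _ _)
  have hXK : ∀ t ∈ Icc (0:ℝ) T, ‖X t‖ ≤ K := by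
    intro t ht
    rw [Real.norm_eq_abs, abs_le]
    constructor
    · have := hXlb t ht
      have : -M ≥ -K := by have := le_max_left M CY; linarith
      linarith [hXlb t ht]
    · exact le_trans (hXnonpos t ht) hK0
  have hYK : ∀ t ∈ Icc (0:ℝ) T, ‖Y t‖ ≤ K := by
    intro t ht
    exact le_trans (hCY t ht) (le_max_right _ _)
  set Kl : ℝ≥0 := Real.toNNReal (2 * K / κmin) with hKldef
  have hv : ∀ t : ℝ, LipschitzOnWith Kl (fun x : ℝ => φ - x^2 / κ' t) (Metric.closedBall 0 K) := by
    intro t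
    apply LipschitzOnWith.of_dist_le_mul
    intro x hx y hy
    have hxK : |x| ≤ K := by
      rw [Metric.mem_closedBall, Real.dist_eq, sub_zero] at hx; exact hx
    have hyK : |y| ≤ K := by
      rw [Metric.mem_closedBall, Real.dist_eq, sub_zero] at hy; exact hy
    rw [Real.dist_eq, Real.dist_eq]
    have hKlge : 2 * K / κmin ≤ (Kl : ℝ) := Real.le_coe_toNNReal _
    have hκ't : 0 < κ' t := hκ'pos t
    have heq : (φ - x^2 / κ' t) - (φ - y^2 / κ' t) = ((y - x) * (y + x)) * (κ' t)⁻¹ := by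
      field_simp; ring
    rw [heq, abs_mul, abs_mul, abs_of_pos (inv_pos.2 hκ't)]
    have h1 : |y - x| = |x - y| := abs_sub_comm y x
    have h2 : |y + x| ≤ 2 * K := by
      calc |y + x| ≤ |y| + |x| := abs_add_le _ _
        _ ≤ 2 * K := by linarith
    have h3 : (κ' t)⁻¹ ≤ κmin⁻¹ := hκ'invle t
    have h4 : (0:ℝ) < κmin⁻¹ := inv_pos.2 hκ0
    calc |y - x| * |y + x| * (κ' t)⁻¹ ≤ |x - y| * (2 * K) * κmin⁻¹ := by
          rw [h1]
          apply mul_le_mul (mul_le_mul_of_nonneg_left h2 (abs_nonneg _)) h3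
            (inv_pos.2 hκ't).le
          positivity
      _ = (2 * K / κmin) * |x - y| := by field_simp
      _ ≤ (Kl : ℝ) * |x - y| := mul_le_mul_of_nonneg_right hKlge (abs_nonneg _)
  have hXd' : ∀ t ∈ Ioc (0:ℝ) T,
      HasDerivWithinAt X (φ - (X t)^2 / κ' t) (Iic t) t := by
    intro t ht
    have ht' : t ∈ Icc (0:ℝ) T := ⟨ht.1.le, ht.2⟩
    have := (hXderiv t ht').hasDerivWithinAt (s := Iic t)
    rwa [← hκ'eq t ht'] at this
  have hYd' : ∀ t ∈ Ioc (0:ℝ) T,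
      HasDerivWithinAt Y (φ - (Y t)^2 / κ' t) (Iic t) t := by
    intro t ht
    have ht' : t ∈ Icc (0:ℝ) T := ⟨ht.1.le, ht.2⟩
    have := (hY t ht').hasDerivWithinAt (s := Iic t)
    rwa [← hκ'eq t ht'] at this
  have hXs : ∀ t ∈ Ioc (0:ℝ) T, X t ∈ Metric.closedBall (0:ℝ) K := by
    intro t ht
    rw [Metric.mem_closedBall, Real.dist_eq, sub_zero, ← Real.norm_eq_abs]
    exact hXK t ⟨ht.1.le, ht.2⟩
  have hYs : ∀ t ∈ Ioc (0:ℝ) T, Y t ∈ Metric.closedBall (0:ℝ) K := by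
    intro t ht
    rw [Metric.mem_closedBall, Real.dist_eq, sub_zero, ← Real.norm_eq_abs]
    exact hYK t ⟨ht.1.le, ht.2⟩
  exact ODE_solution_unique_of_mem_Icc_left (fun t _ => hv t) hXcont hXd' hXs hYcont hYd' hYs
    (by rw [hXT, hYT])
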